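/- Let A be a real M×N matrix such that AA* is invertible. Suppose y = Ax + e where x ∈ ℝ^N is s-sparse and e ∈ ℝ^M, with k ≥ s. Let μ ∈ ℝ^N be (k−1)-sparse, set z = μ + A*(AA*)⁻¹(y − Aμ), let T_k be an index set of k largest absolute entries of z (|T_k| = k and every entry of z indexed by T_k has absolute value at least that of every entry indexed outside T_k), and let v = z_{T_k}. Then ‖x − v‖₂ ≤ 2√2 · γ_{2k+s−1}(A) · ‖x − μ‖₂ + (√(2+2θ_{k+s}(A)) + √(1+θ_k(A))) · ‖e‖₂. -/

import Mathlib

open Matrix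

/-- The Euclidean (ℓ²) norm of a vector in ℝⁿ. -/
noncomputable def norm2 {n : ℕ} (x : Fin n → ℝ) : ℝ := Real.sqrt (∑ i, x i ^ 2)

/-- `x` is `s`-sparse: it has at most `s` nonzero entries. -/
def sparse {n : ℕ} (s : ℕ) (x : Fin n → ℝ) : Prop :=
  (Finset.univ.filter fun i => x i ≠ 0).card ≤ s

/-- `restrict T x` is the vector agreeing with `x` on `T` and zero outside `T`. -/
def restrict {n : ℕ} (T : Finset (Fin n)) (x : Fin n → ℝ) : Fin n → ℝ :=
  fun i => if i ∈ T then x i else 0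

/-- The preconditioned matrix `(AAᴴ)^{-1/2} A`, where `(AAᴴ)^{-1/2}` is the inverse of the
positive semidefinite square root of `AAᴴ`. -/
noncomputable def precond {M N : ℕ} (A : Matrix (Fin M) (Fin N) ℝ) :
    Matrix (Fin M) (Fin N) ℝ :=
  ((Matrix.posSemidef_self_mul_conjTranspose A).1.eigenvectorUnitary.1 *
      diagonal ((↑) ∘ (√·) ∘ (Matrix.posSemidef_self_mul_conjTranspose A).1.eigenvalues) *
      (star (Matrix.posSemidef_self_mul_conjTranspose A).1.eigenvectorUnitary :
        Matrix (Fin M) (Fin M) ℝ))⁻¹ * A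

/-- The preconditioned restricted isometry constant `γ_s(A)`: the smallest `γ ≥ 0` such that
`(1-γ)‖x‖₂² ≤ ‖(AAᴴ)^{-1/2}Ax‖₂²` for all `s`-sparse `x`. -/
noncomputable def pripConst {M N : ℕ} (A : Matrix (Fin M) (Fin N) ℝ) (s : ℕ) : ℝ :=
  sInf {γ : ℝ | 0 ≤ γ ∧ ∀ x : Fin N → ℝ, sparse s x →
    (1 - γ) * norm2 x ^ 2 ≤ norm2 ((precond A).mulVec x) ^ 2}

/-- The restricted isometry constant `δ_s(B)`: the smallest `δ ≥ 0` such that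
`(1-δ)‖x‖₂² ≤ ‖Bx‖₂² ≤ (1+δ)‖x‖₂²` for all `s`-sparse `x`. -/
noncomputable def ripConst {m n : ℕ} (B : Matrix (Fin m) (Fin n) ℝ) (s : ℕ) : ℝ :=
  sInf {δ : ℝ | 0 ≤ δ ∧ ∀ x : Fin n → ℝ, sparse s x →
    (1 - δ) * norm2 x ^ 2 ≤ norm2 (B.mulVec x) ^ 2 ∧
      norm2 (B.mulVec x) ^ 2 ≤ (1 + δ) * norm2 x ^ 2}

/-- `θ_t(A) = δ_t((AAᴴ)⁻¹A)`. -/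
noncomputable def thetaConst {M N : ℕ} (A : Matrix (Fin M) (Fin N) ℝ) (t : ℕ) : ℝ :=
  ripConst ((A * Aᴴ)⁻¹ * A) t

namespace StmtAux

/-! ### norm2 basics -/

variable {n : ℕ}

lemma norm2_nonneg (x : Fin n → ℝ) : 0 ≤ norm2 x := Real.sqrt_nonneg _

lemma sq_norm2 (x : Fin n → ℝ) : norm2 x ^ 2 = ∑ i, x i ^ 2 := by
  rw [norm2, Real.sq_sqrt]
  exact Finset.sum_nonneg fun i _ => sq_nonneg _

lemma cauchy (x y : Fin n → ℝ) : ∑ i, x i * y i ≤ norm2 x * norm2 y := by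
  have h := Finset.sum_mul_sq_le_sq_mul_sq Finset.univ x y
  have h2 : (norm2 x * norm2 y) ^ 2 = (∑ i, x i ^ 2) * ∑ i, y i ^ 2 := by
    rw [mul_pow, sq_norm2, sq_norm2]
  nlinarith [norm2_nonneg x, norm2_nonneg y, mul_nonneg (norm2_nonneg x) (norm2_nonneg y),
    sq_abs (∑ i, x i * y i), abs_nonneg (∑ i, x i * y i),
    le_abs_self (∑ i, x i * y i)]

lemma norm2_triangle (x y : Fin n → ℝ) : norm2 (x + y) ≤ norm2 x + norm2 y := by
  have h : norm2 (x + y) ^ 2 ≤ (norm2 x + norm2 y) ^ 2 := by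
    have hc := cauchy x y
    have h1 : norm2 (x+y) ^ 2 = ∑ i, (x i + y i)^2 := sq_norm2 _
    have h2 := sq_norm2 x
    have h3 := sq_norm2 y
    have : ∑ i, (x i + y i)^2 = (∑ i, x i ^2) + 2*(∑ i, x i * y i) + ∑ i, y i^2 := by
      rw [Finset.mul_sum, ← Finset.sum_add_distrib, ← Finset.sum_add_distrib]
      exact Finset.sum_congr rfl fun i _ => by ring
    nlinarith
  nlinarith [norm2_nonneg (x+y), norm2_nonneg x, norm2_nonneg y,
    add_nonneg (norm2_nonneg x) (norm2_nonneg y)]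

lemma norm2_neg (x : Fin n → ℝ) : norm2 (-x) = norm2 x := by
  unfold norm2; congr 1; exact Finset.sum_congr rfl fun i _ => by simp [neg_pow]

lemma norm2_sub_le (x y : Fin n → ℝ) : norm2 (x - y) ≤ norm2 x + norm2 y := by
  have h := norm2_triangle x (-y)
  rw [norm2_neg] at h
  simpa [sub_eq_add_neg] using h

lemma norm2_eq_zero {x : Fin n → ℝ} (h : norm2 x = 0) : x = 0 := by
  have hs : ∑ i, x i ^ 2 = 0 := by
    have h2 := sq_norm2 x
    rw [h] at h2
    simpa using h2.symm
  have hz := (Finset.sum_eq_zero_iff_of_nonneg (fun i _ => sq_nonneg (x i))).mp hs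
  ext i
  have := hz i (Finset.mem_univ i)
  have : x i = 0 := by nlinarith [this]
  simpa using this

lemma norm2_smul (c : ℝ) (x : Fin n → ℝ) : norm2 (c • x) = |c| * norm2 x := by
  rw [norm2, norm2]
  have h : ∑ i, (c • x) i ^ 2 = c ^ 2 * ∑ i, x i ^ 2 := by
    rw [Finset.mul_sum]
    exact Finset.sum_congr rfl fun i _ => by simp [smul_eq_mul]; ring
  rw [h, Real.sqrt_mul (sq_nonneg c), Real.sqrt_sq_eq_abs]

lemma sq_norm2_dot (x : Fin n → ℝ) : norm2 x ^ 2 = x ⬝ᵥ x := by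
  rw [sq_norm2, dotProduct]
  exact Finset.sum_congr rfl fun i _ => by ring

/-! ### sparsity and restriction -/

/-- support of x -/
noncomputable def supp (x : Fin n → ℝ) : Finset (Fin n) :=
  Finset.univ.filter fun i => x i ≠ 0

lemma mem_supp {x : Fin n → ℝ} {i : Fin n} : i ∈ supp x ↔ x i ≠ 0 := by
  simp [supp]

lemma sparse_iff {s : ℕ} {x : Fin n → ℝ} : sparse s x ↔ (supp x).card ≤ s := Iff.rfl

lemma sparse_of_supp_subset {x : Fin n → ℝ} {T : Finset (Fin n)} (h : ∀ i, x i ≠ 0 → i ∈ T)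
    {s : ℕ} (hT : T.card ≤ s) : sparse s x := by
  refine le_trans (Finset.card_le_card ?_) hT
  intro i hi
  simp only [Finset.mem_filter] at hi
  exact h i hi.2

lemma restrict_sparse (T : Finset (Fin n)) (x : Fin n → ℝ) {s : ℕ} (hT : T.card ≤ s) :
    sparse s (restrict T x) := by
  refine sparse_of_supp_subset (fun i hi => ?_) hT
  by_contra hne
  simp [restrict, hne] at hi

lemma sq_norm2_restrict (T : Finset (Fin n)) (x : Fin n → ℝ) :
    norm2 (restrict T x) ^ 2 = ∑ i ∈ T, x i ^ 2 := by
  rw [sq_norm2]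
  have h : ∀ i, restrict T x i ^ 2 = if i ∈ T then x i ^ 2 else 0 := fun i => by
    by_cases hi : i ∈ T <;> simp [restrict, hi]
  simp_rw [h]
  rw [Finset.sum_ite_mem, Finset.univ_inter]

lemma dot_restrict_self (T : Finset (Fin n)) (g : Fin n → ℝ) :
    restrict T g ⬝ᵥ g = norm2 (restrict T g) ^ 2 := by
  rw [sq_norm2_restrict, dotProduct]
  have h : ∀ i, restrict T g i * g i = if i ∈ T then g i ^ 2 else 0 := fun i => by
    by_cases hi : i ∈ T <;> simp [restrict, hi, pow_two]
  simp_rw [h]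
  rw [Finset.sum_ite_mem, Finset.univ_inter]

lemma restrict_sub (T : Finset (Fin n)) (p q : Fin n → ℝ) :
    restrict T (p - q) = restrict T p - restrict T q := by
  ext i
  by_cases hi : i ∈ T <;> simp [restrict, hi]

lemma restrict_add (T : Finset (Fin n)) (p q : Fin n → ℝ) :
    restrict T (p + q) = restrict T p + restrict T q := by
  ext i
  by_cases hi : i ∈ T <;> simp [restrict, hi]

/-- thresholding: entries of z on T dominate those off T, |S\T| ≤ |T\S| ⇒
    ‖z_{S\T}‖ ≤ ‖z_{T\S}‖ -/
lemma threshold {z : Fin n → ℝ} {S T : Finset (Fin n)}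
    (hcard : (S \ T).card ≤ (T \ S).card)
    (hbig : ∀ i ∈ T, ∀ j ∉ T, |z j| ≤ |z i|) :
    norm2 (restrict (S \ T) z) ≤ norm2 (restrict (T \ S) z) := by
  have hsq : norm2 (restrict (S \ T) z) ^ 2 ≤ norm2 (restrict (T \ S) z) ^ 2 := by
    rw [sq_norm2_restrict, sq_norm2_restrict]
    rcases Finset.eq_empty_or_nonempty (T \ S) with he | hne
    · have : (S \ T) = ∅ := by
        rw [he] at hcard; simpa using Finset.card_eq_zero.mp (Nat.le_zero.mp hcard)
      simp [this, he]
    · obtain ⟨i0, hi0, hmin⟩ := Finset.exists_min_image (T \ S) (fun i => z i ^ 2) hne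
      have hstep : ∑ j ∈ S \ T, z j ^ 2 ≤ (S \ T).card * z i0 ^ 2 := by
        rw [← nsmul_eq_mul]
        refine Finset.sum_le_card_nsmul _ _ _ fun j hj => ?_
        have hjT : j ∉ T := (Finset.mem_sdiff.mp hj).2
        have := hbig i0 (Finset.mem_sdiff.mp hi0).1 j hjT
        nlinarith [abs_nonneg (z j), abs_nonneg (z i0), sq_abs (z j), sq_abs (z i0)]
      have hstep2 : ((T \ S).card : ℝ) * z i0 ^ 2 ≤ ∑ i ∈ T \ S, z i ^ 2 := by
        rw [← nsmul_eq_mul]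
        exact Finset.card_nsmul_le_sum _ _ _ fun i hi => hmin i hi
      have hc : ((S \ T).card : ℝ) ≤ ((T \ S).card : ℝ) := by exact_mod_cast hcard
      nlinarith [sq_nonneg (z i0)]
  nlinarith [norm2_nonneg (restrict (S \ T) z), norm2_nonneg (restrict (T \ S) z)]

/-! ### matrix layer -/

variable {M N : ℕ} (A : Matrix (Fin M) (Fin N) ℝ)

/-- the projection onto the row space -/
noncomputable def P : Matrix (Fin N) (Fin N) ℝ := Aᴴ * (A * Aᴴ)⁻¹ * A

lemma P_transpose : (P A)ᵀ = P A := by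
  have h1 : (A * Aᴴ)ᵀ = A * Aᴴ := by
    rw [conjTranspose_eq_transpose_of_trivial, transpose_mul, transpose_transpose]
  rw [P, transpose_mul, transpose_mul, transpose_nonsing_inv, h1,
    conjTranspose_eq_transpose_of_trivial, transpose_transpose, Matrix.mul_assoc]

lemma P_idem (hA : IsUnit (A * Aᴴ).det) : P A * P A = P A := by
  rw [P]
  have h : (A * Aᴴ)⁻¹ * (A * Aᴴ) = 1 := nonsing_inv_mul _ hA
  calc Aᴴ * (A * Aᴴ)⁻¹ * A * (Aᴴ * (A * Aᴴ)⁻¹ * A)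
      = Aᴴ * ((A * Aᴴ)⁻¹ * (A * Aᴴ)) * ((A * Aᴴ)⁻¹ * A) := by
        simp only [Matrix.mul_assoc]
    _ = Aᴴ * (A * Aᴴ)⁻¹ * A := by rw [h, Matrix.mul_one, Matrix.mul_assoc]

lemma BtB : (precond A)ᵀ * precond A = P A := by
  have hH := (Matrix.posSemidef_self_mul_conjTranspose A).1
  set U : Matrix (Fin M) (Fin M) ℝ := hH.eigenvectorUnitary.1 with hU
  set D : Matrix (Fin M) (Fin M) ℝ := diagonal ((↑) ∘ (√·) ∘ hH.eigenvalues) with hD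
  have hUU : star U * U = 1 := Unitary.coe_star_mul_self _
  have hDt : Dᵀ = D := by rw [hD, diagonal_transpose]
  have hst : star U = Uᵀ := by rw [star_eq_conjTranspose, conjTranspose_eq_transpose_of_trivial]
  have hsym : (U * D * star U)ᵀ = U * D * star U := by
    rw [hst, transpose_mul, transpose_mul, transpose_transpose, hDt, Matrix.mul_assoc]
  have hDD : D * D = diagonal (RCLike.ofReal ∘ hH.eigenvalues) := by
    rw [hD, diagonal_mul_diagonal]
    congr 1; ext i
    simp only [Function.comp_apply, RCLike.ofReal_real_eq_id, id]
    exact Real.mul_self_sqrt ((Matrix.posSemidef_self_mul_conjTranspose A).eigenvalues_nonneg i)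
  have hsq : U * D * star U * (U * D * star U) = A * Aᴴ := by
    calc U * D * star U * (U * D * star U) = U * (D * (star U * U) * D) * star U := by
          simp only [Matrix.mul_assoc]
      _ = A * Aᴴ := by
          rw [hUU, Matrix.mul_one, hDD]
          conv_rhs => rw [hH.spectral_theorem, Unitary.conjStarAlgAut_apply]
  show ((U * D * star U)⁻¹ * A)ᵀ * ((U * D * star U)⁻¹ * A) = P A
  set R := U * D * star U with hRdef
  rw [transpose_mul, transpose_nonsing_inv, hsym, P]
  calc Aᵀ * R⁻¹ * (R⁻¹ * A)
      = Aᵀ * (R⁻¹ * R⁻¹) * A := by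
        simp only [Matrix.mul_assoc]
    _ = Aᵀ * (R * R)⁻¹ * A := by
        rw [Matrix.mul_inv_rev R R]
    _ = Aᴴ * (A * Aᴴ)⁻¹ * A := by
        rw [hsq, ← conjTranspose_eq_transpose_of_trivial A]

lemma sq_norm_B (u : Fin N → ℝ) :
    norm2 ((precond A).mulVec u) ^ 2 = u ⬝ᵥ (P A).mulVec u := by
  rw [sq_norm2_dot]
  calc (precond A *ᵥ u) ⬝ᵥ (precond A *ᵥ u)
      = ((precond A *ᵥ u) ᵥ* precond A) ⬝ᵥ u := by rw [dotProduct_mulVec]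
    _ = ((precond A)ᵀ *ᵥ (precond A *ᵥ u)) ⬝ᵥ u := by rw [mulVec_transpose]
    _ = (((precond A)ᵀ * precond A) *ᵥ u) ⬝ᵥ u := by rw [mulVec_mulVec]
    _ = u ⬝ᵥ (P A).mulVec u := by rw [BtB, dotProduct_comm]

/-- symmetric idempotent quadratic form is a squared norm -/
lemma dot_symm_idem (Q : Matrix (Fin N) (Fin N) ℝ) (hs : Qᵀ = Q) (hi : Q * Q = Q)
    (u : Fin N → ℝ) : u ⬝ᵥ Q.mulVec u = norm2 (Q.mulVec u) ^ 2 := by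
  rw [sq_norm2_dot]
  calc u ⬝ᵥ Q *ᵥ u = u ⬝ᵥ (Q * Q) *ᵥ u := by rw [hi]
    _ = u ⬝ᵥ Q *ᵥ (Q *ᵥ u) := by rw [mulVec_mulVec]
    _ = (u ᵥ* Q) ⬝ᵥ (Q *ᵥ u) := by rw [dotProduct_mulVec]
    _ = (Qᵀ *ᵥ u) ⬝ᵥ (Q *ᵥ u) := by rw [mulVec_transpose]
    _ = (Q *ᵥ u) ⬝ᵥ (Q *ᵥ u) := by rw [hs]

/-- ‖Bu‖ ≤ ‖u‖ for all u -/
lemma sq_norm_B_le (hA : IsUnit (A * Aᴴ).det) (u : Fin N → ℝ) :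
    norm2 ((precond A).mulVec u) ^ 2 ≤ norm2 u ^ 2 := by
  have hQs : (1 - P A)ᵀ = 1 - P A := by
    rw [transpose_sub, transpose_one, P_transpose]
  have hQi : (1 - P A) * (1 - P A) = 1 - P A := by
    have := P_idem A hA
    simp only [Matrix.sub_mul, Matrix.mul_sub, Matrix.one_mul, Matrix.mul_one, this]
    abel
  have h := dot_symm_idem (1 - P A) hQs hQi u
  have hnn : 0 ≤ u ⬝ᵥ (1 - P A).mulVec u := h ▸ sq_nonneg _
  have hsplit : u ⬝ᵥ (1 - P A).mulVec u = u ⬝ᵥ u - u ⬝ᵥ (P A).mulVec u := by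
    rw [Matrix.sub_mulVec, dotProduct_sub, Matrix.one_mulVec]
  rw [sq_norm_B A, sq_norm2_dot]
  linarith [hsplit ▸ hnn]

/-! ### the constants -/

lemma prip_mem (s : ℕ) : 0 ≤ pripConst A s ∧ ∀ x : Fin N → ℝ, sparse s x →
    (1 - pripConst A s) * norm2 x ^ 2 ≤ norm2 ((precond A).mulVec x) ^ 2 := by
  have h : pripConst A s ∈ {γ : ℝ | 0 ≤ γ ∧ ∀ x : Fin N → ℝ, sparse s x →
      (1 - γ) * norm2 x ^ 2 ≤ norm2 ((precond A).mulVec x) ^ 2} := by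
    apply IsClosed.csInf_mem
    · have heq : {γ : ℝ | 0 ≤ γ ∧ ∀ x : Fin N → ℝ, sparse s x →
          (1 - γ) * norm2 x ^ 2 ≤ norm2 ((precond A).mulVec x) ^ 2}
        = {γ : ℝ | 0 ≤ γ} ∩ ⋂ (x : Fin N → ℝ), ⋂ (_ : sparse s x),
            {γ : ℝ | (1 - γ) * norm2 x ^ 2 ≤ norm2 ((precond A).mulVec x) ^ 2} := by
        ext γ
        simp only [Set.mem_setOf_eq, Set.mem_inter_iff, Set.mem_iInter]
      rw [heq]
      refine IsClosed.inter (isClosed_le continuous_const continuous_id) ?_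
      refine isClosed_iInter fun x => isClosed_iInter fun _ => ?_
      exact isClosed_le (by fun_prop) continuous_const
    · exact ⟨1, by norm_num, fun x _ => by nlinarith [sq_nonneg (norm2 ((precond A).mulVec x))]⟩
    · exact ⟨0, fun γ hγ => hγ.1⟩
  exact h

lemma frob {m' n' : ℕ} (B : Matrix (Fin m') (Fin n') ℝ) (x : Fin n' → ℝ) :
    norm2 (B.mulVec x) ^ 2 ≤ (∑ i, ∑ j, B i j ^ 2) * norm2 x ^ 2 := by
  rw [sq_norm2, sq_norm2, Finset.sum_mul]
  refine Finset.sum_le_sum fun i _ => ?_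
  exact Finset.sum_mul_sq_le_sq_mul_sq Finset.univ (B i) x

lemma rip_mem {m' n' : ℕ} (B : Matrix (Fin m') (Fin n') ℝ) (s : ℕ) :
    0 ≤ ripConst B s ∧ ∀ x : Fin n' → ℝ, sparse s x →
    (1 - ripConst B s) * norm2 x ^ 2 ≤ norm2 (B.mulVec x) ^ 2 ∧
      norm2 (B.mulVec x) ^ 2 ≤ (1 + ripConst B s) * norm2 x ^ 2 := by
  have h : ripConst B s ∈ {δ : ℝ | 0 ≤ δ ∧ ∀ x : Fin n' → ℝ, sparse s x →
      (1 - δ) * norm2 x ^ 2 ≤ norm2 (B.mulVec x) ^ 2 ∧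
        norm2 (B.mulVec x) ^ 2 ≤ (1 + δ) * norm2 x ^ 2} := by
    apply IsClosed.csInf_mem
    · have heq : {δ : ℝ | 0 ≤ δ ∧ ∀ x : Fin n' → ℝ, sparse s x →
          (1 - δ) * norm2 x ^ 2 ≤ norm2 (B.mulVec x) ^ 2 ∧
            norm2 (B.mulVec x) ^ 2 ≤ (1 + δ) * norm2 x ^ 2}
        = {δ : ℝ | 0 ≤ δ} ∩ ⋂ (x : Fin n' → ℝ), ⋂ (_ : sparse s x),
            ({δ : ℝ | (1 - δ) * norm2 x ^ 2 ≤ norm2 (B.mulVec x) ^ 2} ∩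
             {δ : ℝ | norm2 (B.mulVec x) ^ 2 ≤ (1 + δ) * norm2 x ^ 2}) := by
        ext δ
        simp only [Set.mem_setOf_eq, Set.mem_inter_iff, Set.mem_iInter]
      rw [heq]
      refine IsClosed.inter (isClosed_le continuous_const continuous_id) ?_
      refine isClosed_iInter fun x => isClosed_iInter fun _ => IsClosed.inter ?_ ?_
      · exact isClosed_le (by fun_prop) continuous_const
      · exact isClosed_le continuous_const (by fun_prop)
    · refine ⟨1 + ∑ i, ∑ j, B i j ^ 2, ?_, fun x _ => ⟨?_, ?_⟩⟩
      · positivity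
      · nlinarith [sq_nonneg (norm2 (B.mulVec x)), sq_nonneg (norm2 x),
          Finset.sum_nonneg (fun i (_ : i ∈ Finset.univ) =>
            Finset.sum_nonneg (fun j (_ : j ∈ Finset.univ) => sq_nonneg (B i j)))]
      · have := frob B x
        nlinarith [sq_nonneg (norm2 x)]
    · exact ⟨0, fun δ hδ => hδ.1⟩
  exact h

/-! ### key estimates -/

/-- polarization expansion -/
lemma dot_expand_add (w u : Fin N → ℝ) :
    (w + u) ⬝ᵥ (w + u) = w ⬝ᵥ w + 2 * (w ⬝ᵥ u) + u ⬝ᵥ u := by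
  simp only [dotProduct, Pi.add_apply, Finset.mul_sum]
  rw [← Finset.sum_add_distrib, ← Finset.sum_add_distrib]
  exact Finset.sum_congr rfl fun i _ => by ring

lemma dot_expand_sub (w u : Fin N → ℝ) :
    (w - u) ⬝ᵥ (w - u) = w ⬝ᵥ w - 2 * (w ⬝ᵥ u) + u ⬝ᵥ u := by
  simp only [dotProduct, Pi.sub_apply, Finset.mul_sum]
  rw [← Finset.sum_sub_distrib, ← Finset.sum_add_distrib]
  exact Finset.sum_congr rfl fun i _ => by ring

/-- the RIP cross-inner-product estimate for the preconditioned matrix -/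
lemma cross (hA : IsUnit (A * Aᴴ).det) (t : ℕ) (w u : Fin N → ℝ)
    (hsum : sparse t (w + u)) :
    w ⬝ᵥ u - (precond A *ᵥ w) ⬝ᵥ (precond A *ᵥ u) ≤
      pripConst A t * norm2 (w + u) ^ 2 / 4 := by
  have hγ := (prip_mem A t).2 (w + u) hsum
  have hle := sq_norm_B_le A hA (w - u)
  have e1 : norm2 (w + u) ^ 2 = w ⬝ᵥ w + 2 * (w ⬝ᵥ u) + u ⬝ᵥ u := by
    rw [sq_norm2_dot]; exact dot_expand_add w u
  have e2 : norm2 (w - u) ^ 2 = w ⬝ᵥ w - 2 * (w ⬝ᵥ u) + u ⬝ᵥ u := by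
    rw [sq_norm2_dot]; exact dot_expand_sub w u
  have e3 : norm2 (precond A *ᵥ (w + u)) ^ 2 =
      (precond A *ᵥ w) ⬝ᵥ (precond A *ᵥ w) +
      2 * ((precond A *ᵥ w) ⬝ᵥ (precond A *ᵥ u)) +
      (precond A *ᵥ u) ⬝ᵥ (precond A *ᵥ u) := by
    rw [sq_norm2_dot, Matrix.mulVec_add]; exact dot_expand_add _ _
  have e4 : norm2 (precond A *ᵥ (w - u)) ^ 2 =
      (precond A *ᵥ w) ⬝ᵥ (precond A *ᵥ w) -
      2 * ((precond A *ᵥ w) ⬝ᵥ (precond A *ᵥ u)) +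
      (precond A *ᵥ u) ⬝ᵥ (precond A *ᵥ u) := by
    rw [sq_norm2_dot, Matrix.mulVec_sub]; exact dot_expand_sub _ _
  nlinarith [hγ, hle, e1, e2, e3, e4]

lemma dot_P (u w : Fin N → ℝ) :
    u ⬝ᵥ ((P A) *ᵥ w) = (precond A *ᵥ u) ⬝ᵥ (precond A *ᵥ w) := by
  rw [← BtB]
  calc u ⬝ᵥ ((precond A)ᵀ * precond A) *ᵥ w
      = u ⬝ᵥ (precond A)ᵀ *ᵥ (precond A *ᵥ w) := by rw [mulVec_mulVec]
    _ = (u ᵥ* (precond A)ᵀ) ⬝ᵥ (precond A *ᵥ w) := by rw [dotProduct_mulVec]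
    _ = (precond A *ᵥ u) ⬝ᵥ (precond A *ᵥ w) := by rw [vecMul_transpose]

/-- projection error estimate on a restricted set -/
lemma normQ (hA : IsUnit (A * Aᴴ).det) (t : ℕ) (T : Finset (Fin N)) (w : Fin N → ℝ)
    (hcard : (supp w ∪ T).card ≤ t) :
    norm2 (restrict T (w - (P A) *ᵥ w)) ≤ pripConst A t * norm2 w := by
  set g := w - (P A) *ᵥ w with hgdef
  set u := restrict T g with hudef
  have hγ0 := (prip_mem A t).1
  have hα0 := norm2_nonneg w
  have hβ0 := norm2_nonneg u
  rcases eq_or_lt_of_le hβ0 with hβz | hβpos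
  · rw [← hβz]
    exact mul_nonneg hγ0 hα0
  rcases eq_or_lt_of_le hα0 with hαz | hαpos
  · exfalso
    have hw0 : w = 0 := norm2_eq_zero hαz.symm
    have hg0 : g = 0 := by
      rw [hgdef, hw0, Matrix.mulVec_zero, sub_zero]
    have hu0 : u = 0 := by
      rw [hudef, hg0]
      ext i
      simp [restrict]
    rw [hu0] at hβpos
    have : norm2 (0 : Fin N → ℝ) = 0 := by simp [norm2]
    linarith
  -- main case
  have hsupp : ∀ i, (norm2 u • w + norm2 w • u) i ≠ 0 → i ∈ supp w ∪ T := by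
    intro i hi
    by_contra hni
    simp only [Finset.mem_union, mem_supp] at hni
    push_neg at hni
    have hwi : w i = 0 := hni.1
    have hui : u i = 0 := by simp [hudef, restrict, hni.2]
    simp [hwi, hui] at hi
  have hsparse : sparse t (norm2 u • w + norm2 w • u) :=
    sparse_of_supp_subset hsupp hcard
  have hcross := cross A hA t (norm2 u • w) (norm2 w • u) hsparse
  have hn : norm2 (norm2 u • w + norm2 w • u) ≤ 2 * (norm2 w * norm2 u) := by
    refine le_trans (norm2_triangle _ _) ?_
    rw [norm2_smul, norm2_smul, abs_of_nonneg hβ0, abs_of_nonneg hα0]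
    nlinarith
  have hnsq : norm2 (norm2 u • w + norm2 w • u) ^ 2 ≤ 4 * (norm2 w * norm2 u) ^ 2 := by
    nlinarith [norm2_nonneg (norm2 u • w + norm2 w • u), mul_nonneg hα0 hβ0]
  have hsc1 : (norm2 u • w) ⬝ᵥ (norm2 w • u) = (norm2 u * norm2 w) * (w ⬝ᵥ u) := by
    simp only [smul_dotProduct, dotProduct_smul, smul_eq_mul]
    ring
  have hsc2 : (precond A *ᵥ (norm2 u • w)) ⬝ᵥ (precond A *ᵥ (norm2 w • u)) =
      (norm2 u * norm2 w) * ((precond A *ᵥ w) ⬝ᵥ (precond A *ᵥ u)) := by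
    rw [Matrix.mulVec_smul, Matrix.mulVec_smul]
    simp only [smul_dotProduct, dotProduct_smul, smul_eq_mul]
    ring
  have hβ2 : norm2 u ^ 2 = u ⬝ᵥ g := by
    rw [hudef, dot_restrict_self]
  have hug : u ⬝ᵥ g = u ⬝ᵥ w - (precond A *ᵥ u) ⬝ᵥ (precond A *ᵥ w) := by
    rw [hgdef, dotProduct_sub, dot_P]
  have hcomm1 : w ⬝ᵥ u = u ⬝ᵥ w := dotProduct_comm _ _
  have hcomm2 : (precond A *ᵥ w) ⬝ᵥ (precond A *ᵥ u) =
      (precond A *ᵥ u) ⬝ᵥ (precond A *ᵥ w) := dotProduct_comm _ _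
  -- from hcross: αβ (u⬝ᵥw − Bu⬝ᵥBw) ≤ γ * 4(αβ)²/4 = γ(αβ)²
  have hkey : (norm2 u * norm2 w) * (norm2 u ^ 2) ≤
      pripConst A t * (norm2 w * norm2 u) ^ 2 := by
    rw [hβ2, hug]
    have h1 : norm2 u • w ⬝ᵥ norm2 w • u -
        precond A *ᵥ norm2 u • w ⬝ᵥ precond A *ᵥ norm2 w • u =
        norm2 u * norm2 w * (u ⬝ᵥ w - precond A *ᵥ u ⬝ᵥ precond A *ᵥ w) := by
      rw [hsc1, hsc2, hcomm1, hcomm2]; ring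
    have h2 : pripConst A t * norm2 (norm2 u • w + norm2 w • u) ^ 2 / 4 ≤
        pripConst A t * (norm2 w * norm2 u) ^ 2 := by
      nlinarith [mul_le_mul_of_nonneg_left hnsq hγ0]
    linarith [hcross, h1 ▸ hcross, h2]
  have hpos : 0 < norm2 w * norm2 u ^ 2 := by positivity
  refine le_of_mul_le_mul_right ?_ hpos
  nlinarith [hkey]

/-- theta estimate on a restricted set -/
lemma theta_restrict (t : ℕ) (T : Finset (Fin N)) (hT : T.card ≤ t) (e : Fin M → ℝ) :
    norm2 (restrict T ((Aᴴ * (A * Aᴴ)⁻¹) *ᵥ e)) ≤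
      Real.sqrt (1 + thetaConst A t) * norm2 e := by
  have hDt : (Aᴴ * (A * Aᴴ)⁻¹)ᵀ = (A * Aᴴ)⁻¹ * A := by
    rw [transpose_mul, transpose_nonsing_inv]
    have h1 : (A * Aᴴ)ᵀ = A * Aᴴ := by
      rw [conjTranspose_eq_transpose_of_trivial, transpose_mul, transpose_transpose]
    have h2 : (Aᴴ)ᵀ = A := by
      rw [conjTranspose_eq_transpose_of_trivial, transpose_transpose]
    rw [h1, h2]
  set u := restrict T ((Aᴴ * (A * Aᴴ)⁻¹) *ᵥ e) with hudef
  have hθ := rip_mem ((A * Aᴴ)⁻¹ * A) t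
  have hθ0 : 0 ≤ thetaConst A t := hθ.1
  have hu_sparse : sparse t u := restrict_sparse T _ hT
  have hup := (hθ.2 u hu_sparse).2
  have hβ0 := norm2_nonneg u
  have he0 := norm2_nonneg e
  have hCu : norm2 (((A * Aᴴ)⁻¹ * A) *ᵥ u) ≤ Real.sqrt (1 + thetaConst A t) * norm2 u := by
    have hs : Real.sqrt (1 + thetaConst A t) ^ 2 = 1 + thetaConst A t :=
      Real.sq_sqrt (by linarith)
    have hup' : norm2 (((A * Aᴴ)⁻¹ * A) *ᵥ u) ^ 2 ≤ (1 + thetaConst A t) * norm2 u ^ 2 := hup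
    nlinarith [hup', norm2_nonneg (((A * Aᴴ)⁻¹ * A) *ᵥ u), Real.sqrt_nonneg (1 + thetaConst A t),
      mul_nonneg (Real.sqrt_nonneg (1 + thetaConst A t)) hβ0]
  have hβ2 : norm2 u ^ 2 = u ⬝ᵥ ((Aᴴ * (A * Aᴴ)⁻¹) *ᵥ e) := by
    rw [hudef, dot_restrict_self]
  have hswap : u ⬝ᵥ ((Aᴴ * (A * Aᴴ)⁻¹) *ᵥ e) = (((A * Aᴴ)⁻¹ * A) *ᵥ u) ⬝ᵥ e := by
    rw [dotProduct_mulVec, ← hDt, mulVec_transpose]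
  have hcs : (((A * Aᴴ)⁻¹ * A) *ᵥ u) ⬝ᵥ e ≤ norm2 (((A * Aᴴ)⁻¹ * A) *ᵥ u) * norm2 e := by
    rw [dotProduct]
    exact cauchy _ _
  rcases eq_or_lt_of_le hβ0 with hβz | hβpos
  · rw [← hβz]
    positivity
  · have hchain : norm2 u ^ 2 ≤ Real.sqrt (1 + thetaConst A t) * norm2 u * norm2 e := by
      rw [hβ2, hswap]
      calc (((A * Aᴴ)⁻¹ * A) *ᵥ u) ⬝ᵥ e ≤ norm2 (((A * Aᴴ)⁻¹ * A) *ᵥ u) * norm2 e := hcs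
        _ ≤ Real.sqrt (1 + thetaConst A t) * norm2 u * norm2 e :=
          mul_le_mul_of_nonneg_right hCu he0
    nlinarith [hchain, hβpos]

end StmtAux

set_option maxHeartbeats 2000000 in
open StmtAux in
theorem stmt8 {M N : ℕ} (A : Matrix (Fin M) (Fin N) ℝ) (hA : IsUnit (A * Aᴴ).det)
    (s k : ℕ) (hks : k ≥ s)
    (x : Fin N → ℝ) (hx : sparse s x) (e : Fin M → ℝ) (y : Fin M → ℝ)
    (hy : y = A.mulVec x + e)
    (μ : Fin N → ℝ) (hμ : sparse (k - 1) μ)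
    (z : Fin N → ℝ)
    (hz : z = μ + (Aᴴ * (A * Aᴴ)⁻¹).mulVec (y - A.mulVec μ))
    (Tk : Finset (Fin N)) (hTcard : Tk.card = k)
    (hTbig : ∀ i ∈ Tk, ∀ j ∉ Tk, |z j| ≤ |z i|)
    (v : Fin N → ℝ) (hv : v = restrict Tk z) :
    norm2 (x - v) ≤
      2 * Real.sqrt 2 * pripConst A (2 * k + s - 1) * norm2 (x - μ) +
      (Real.sqrt (2 + 2 * thetaConst A (k + s)) + Real.sqrt (1 + thetaConst A k)) *
        norm2 e := by
  classical
  set w : Fin N → ℝ := x - μ with hwdef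
  set g : Fin N → ℝ := x - z with hgdef
  -- the basic identity
  have hyz : y - A.mulVec μ = A *ᵥ w + e := by
    rw [hy, hwdef, Matrix.mulVec_sub]
    ext i
    simp only [Pi.sub_apply, Pi.add_apply]
    ring
  have hgid : g = (w - (StmtAux.P A) *ᵥ w) - (Aᴴ * (A * Aᴴ)⁻¹) *ᵥ e := by
    rw [hgdef, hz, hyz, Matrix.mulVec_add, Matrix.mulVec_mulVec]
    have hP : StmtAux.P A = Aᴴ * (A * Aᴴ)⁻¹ * A := rfl
    rw [hwdef, hP]
    ext i
    simp only [Pi.sub_apply, Pi.add_apply]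
    ring
  -- supports and cardinalities
  have hSx : (supp x).card ≤ s := hx
  have hSμ : (supp μ).card ≤ k - 1 := hμ
  have hsuppw : supp w ⊆ supp x ∪ supp μ := by
    intro i hi
    rw [mem_supp] at hi
    rw [Finset.mem_union, mem_supp, mem_supp]
    by_contra hc
    push_neg at hc
    have : w i = x i - μ i := by rw [hwdef]; rfl
    rw [this, hc.1, hc.2] at hi
    simp at hi
  have hsw_card : (supp w).card ≤ s + (k - 1) := by
    calc (supp w).card ≤ (supp x ∪ supp μ).card := Finset.card_le_card hsuppw
      _ ≤ (supp x).card + (supp μ).card := Finset.card_union_le _ _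
      _ ≤ s + (k - 1) := by omega
  have hcard1 : (supp w ∪ Tk).card ≤ 2 * k + s - 1 := by
    calc (supp w ∪ Tk).card ≤ (supp w).card + Tk.card := Finset.card_union_le _ _
      _ ≤ 2 * k + s - 1 := by omega
  set S := supp x with hSdef
  have hxoff : ∀ i ∉ S, x i = 0 := by
    intro i hi
    by_contra h
    exact hi (mem_supp.mpr h)
  set U := (S \ Tk) ∪ (Tk \ S) with hUdef
  have hcardU_theta : U.card ≤ k + s := by
    have h1 : (S \ Tk).card ≤ S.card := Finset.card_le_card (Finset.sdiff_subset)
    have h2 : (Tk \ S).card ≤ Tk.card := Finset.card_le_card (Finset.sdiff_subset)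
    calc U.card ≤ (S \ Tk).card + (Tk \ S).card := Finset.card_union_le _ _
      _ ≤ k + s := by omega
  have hcardU_Q : (supp w ∪ U).card ≤ 2 * k + s - 1 := by
    have hsub : supp w ∪ U ⊆ (S ∪ supp μ) ∪ Tk := by
      intro i hi
      rcases Finset.mem_union.mp hi with h | h
      · exact Finset.mem_union_left _ (hsuppw h)
      · rcases Finset.mem_union.mp h with h' | h'
        · exact Finset.mem_union_left _
            (Finset.mem_union_left _ ((Finset.mem_sdiff.mp h').1))
        · exact Finset.mem_union_right _ ((Finset.mem_sdiff.mp h').1)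
    have hc1 : ((S ∪ supp μ) ∪ Tk).card ≤ (S ∪ supp μ).card + Tk.card :=
      Finset.card_union_le _ _
    have hc2 : (S ∪ supp μ).card ≤ S.card + (supp μ).card :=
      Finset.card_union_le _ _
    have hc3 : (supp w ∪ U).card ≤ ((S ∪ supp μ) ∪ Tk).card :=
      Finset.card_le_card hsub
    omega
  -- splitting of the error
  have hsplit : norm2 (x - v) ^ 2 =
      norm2 (restrict Tk g) ^ 2 + norm2 (restrict Tkᶜ x) ^ 2 := by
    rw [sq_norm2, sq_norm2_restrict, sq_norm2_restrict]
    rw [← Finset.sum_filter_add_sum_filter_not Finset.univ (· ∈ Tk) (fun i => (x - v) i ^ 2)]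
    congr 1
    · rw [show Finset.univ.filter (· ∈ Tk) = Tk from by ext i; simp]
      refine Finset.sum_congr rfl fun i hi => ?_
      have hvz : v i = z i := by rw [hv]; simp [restrict, hi]
      have hgi : g i = x i - z i := by rw [hgdef]; rfl
      simp only [Pi.sub_apply, hvz, hgi]
    · rw [show Finset.univ.filter (fun i => ¬ i ∈ Tk) = Tkᶜ from by ext i; simp]
      refine Finset.sum_congr rfl fun i hi => ?_
      have hiT : i ∉ Tk := by simpa using hi
      have hvz : v i = 0 := by rw [hv]; simp [restrict, hiT]
      simp only [Pi.sub_apply, hvz, sub_zero]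
  -- estimate on Tk
  have hθk := theta_restrict A k Tk (le_of_eq hTcard) e
  have ha : norm2 (restrict Tk g) ≤
      pripConst A (2 * k + s - 1) * norm2 w + Real.sqrt (1 + thetaConst A k) * norm2 e := by
    rw [hgid, restrict_sub]
    exact le_trans (norm2_sub_le _ _)
      (add_le_add (normQ A hA _ Tk w hcard1) hθk)
  -- estimate off Tk
  have hb1 : restrict Tkᶜ x = restrict (S \ Tk) x := by
    ext i
    by_cases hiT : i ∈ Tk
    · simp [restrict, hiT]
    · by_cases hiS : i ∈ S
      · simp [restrict, hiT, hiS]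
      · simp [restrict, hiT, hiS, hxoff i hiS]
  have hxgz : x = g + z := by
    rw [hgdef]
    ext i
    simp only [Pi.add_apply, Pi.sub_apply]
    ring
  have hb2 : restrict (S \ Tk) x = restrict (S \ Tk) g + restrict (S \ Tk) z := by
    calc restrict (S \ Tk) x = restrict (S \ Tk) (g + z) := by rw [← hxgz]
      _ = restrict (S \ Tk) g + restrict (S \ Tk) z := restrict_add _ _ _
  have hb3 : (S \ Tk).card ≤ (Tk \ S).card := by
    have h1 : (S \ Tk).card + (S ∩ Tk).card = S.card := Finset.card_sdiff_add_card_inter S Tk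
    have h2 : (Tk \ S).card + (Tk ∩ S).card = Tk.card := Finset.card_sdiff_add_card_inter Tk S
    have h3 : (S ∩ Tk).card = (Tk ∩ S).card := by rw [Finset.inter_comm]
    omega
  have hthresh := threshold hb3 hTbig
  have hb5 : restrict (Tk \ S) z = -(restrict (Tk \ S) g) := by
    ext i
    by_cases hi : i ∈ Tk \ S
    · have hiS : i ∉ S := (Finset.mem_sdiff.mp hi).2
      have hgi : g i = x i - z i := by rw [hgdef]; rfl
      simp [restrict, hi, hgi, hxoff i hiS]
    · simp [restrict, hi]
  have hdisj : Disjoint (S \ Tk) (Tk \ S) := disjoint_sdiff_sdiff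
  have h6 : norm2 (restrict U g) ^ 2 =
      norm2 (restrict (S \ Tk) g) ^ 2 + norm2 (restrict (Tk \ S) g) ^ 2 := by
    rw [sq_norm2_restrict, sq_norm2_restrict, sq_norm2_restrict, hUdef,
      Finset.sum_union hdisj]
  have h7 : norm2 (restrict (S \ Tk) g) + norm2 (restrict (Tk \ S) g) ≤
      Real.sqrt 2 * norm2 (restrict U g) := by
    have hs2 : Real.sqrt 2 ^ 2 = 2 := Real.sq_sqrt (by norm_num)
    nlinarith [h6, norm2_nonneg (restrict (S \ Tk) g), norm2_nonneg (restrict (Tk \ S) g),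
      norm2_nonneg (restrict U g), Real.sqrt_nonneg 2,
      sq_nonneg (norm2 (restrict (S \ Tk) g) - norm2 (restrict (Tk \ S) g)),
      mul_nonneg (Real.sqrt_nonneg 2) (norm2_nonneg (restrict U g))]
  have h8 : norm2 (restrict U g) ≤
      pripConst A (2 * k + s - 1) * norm2 w +
        Real.sqrt (1 + thetaConst A (k + s)) * norm2 e := by
    rw [hgid, restrict_sub]
    exact le_trans (norm2_sub_le _ _)
      (add_le_add (normQ A hA _ U w hcardU_Q) (theta_restrict A (k + s) U hcardU_theta e))
  have hb : norm2 (restrict Tkᶜ x) ≤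
      Real.sqrt 2 * (pripConst A (2 * k + s - 1) * norm2 w +
        Real.sqrt (1 + thetaConst A (k + s)) * norm2 e) := by
    calc norm2 (restrict Tkᶜ x) = norm2 (restrict (S \ Tk) x) := by rw [hb1]
      _ ≤ norm2 (restrict (S \ Tk) g) + norm2 (restrict (S \ Tk) z) := by
          rw [hb2]; exact norm2_triangle _ _
      _ ≤ norm2 (restrict (S \ Tk) g) + norm2 (restrict (Tk \ S) g) := by
          have : norm2 (restrict (Tk \ S) z) = norm2 (restrict (Tk \ S) g) := by
            rw [hb5, norm2_neg]
          linarith [hthresh, this]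
      _ ≤ Real.sqrt 2 * norm2 (restrict U g) := h7
      _ ≤ Real.sqrt 2 * (pripConst A (2 * k + s - 1) * norm2 w +
            Real.sqrt (1 + thetaConst A (k + s)) * norm2 e) :=
          mul_le_mul_of_nonneg_left h8 (Real.sqrt_nonneg 2)
  -- combine
  have hxv : norm2 (x - v) ≤ norm2 (restrict Tk g) + norm2 (restrict Tkᶜ x) := by
    nlinarith [hsplit, norm2_nonneg (x - v), norm2_nonneg (restrict Tk g),
      norm2_nonneg (restrict Tkᶜ x),
      add_nonneg (norm2_nonneg (restrict Tk g)) (norm2_nonneg (restrict Tkᶜ x))]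
  have hγ0 : 0 ≤ pripConst A (2 * k + s - 1) := (prip_mem A _).1
  have hw0 : 0 ≤ norm2 w := norm2_nonneg w
  have he0 : 0 ≤ norm2 e := norm2_nonneg e
  have hθks0 : 0 ≤ thetaConst A (k + s) := (rip_mem ((A * Aᴴ)⁻¹ * A) (k + s)).1
  have hsqrt2_1 : (1 : ℝ) ≤ Real.sqrt 2 := by
    calc (1 : ℝ) = Real.sqrt 1 := Real.sqrt_one.symm
      _ ≤ Real.sqrt 2 := Real.sqrt_le_sqrt (by norm_num)
  have hmerge : Real.sqrt 2 * Real.sqrt (1 + thetaConst A (k + s)) =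
      Real.sqrt (2 + 2 * thetaConst A (k + s)) := by
    rw [show (2:ℝ) + 2 * thetaConst A (k + s) = 2 * (1 + thetaConst A (k + s)) from by ring,
      Real.sqrt_mul (by norm_num)]
  calc norm2 (x - v) ≤ norm2 (restrict Tk g) + norm2 (restrict Tkᶜ x) := hxv
    _ ≤ (pripConst A (2 * k + s - 1) * norm2 w + Real.sqrt (1 + thetaConst A k) * norm2 e) +
        Real.sqrt 2 * (pripConst A (2 * k + s - 1) * norm2 w +
          Real.sqrt (1 + thetaConst A (k + s)) * norm2 e) := add_le_add ha hb
    _ ≤ 2 * Real.sqrt 2 * pripConst A (2 * k + s - 1) * norm2 w +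
        (Real.sqrt (2 + 2 * thetaConst A (k + s)) + Real.sqrt (1 + thetaConst A k)) *
          norm2 e := by
        nlinarith [mul_nonneg hγ0 hw0, hsqrt2_1, hmerge, he0,
          Real.sqrt_nonneg (1 + thetaConst A (k + s))]
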